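/- Every con-CRD is a gen-CRD whose defining sets I, O_0, O_1 are all semilinear, provided every reaction with empty product set also has empty reactant set. -/

import Mathlib

/-- One reaction step of a CRN with reaction set `R`. -/
def Step {Λ : Type*} (R : Set ((Λ → ℕ) × (Λ → ℕ))) (c c' : Λ → ℕ) : Prop :=
  ∃ rp ∈ R, (∀ s, rp.1 s ≤ c s) ∧ c' = fun s => c s - rp.1 s + rp.2 s

/-- Reachability: reflexive-transitive closure of `Step`. -/
def Reach {Λ : Type*} (R : Set ((Λ → ℕ) × (Λ → ℕ))) : (Λ → ℕ) → (Λ → ℕ) → Prop :=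
  Relation.ReflTransGen (Step R)

def preS {Λ : Type*} (R : Set ((Λ → ℕ) × (Λ → ℕ))) (X : Set (Λ → ℕ)) : Set (Λ → ℕ) :=
  {c | ∃ x ∈ X, Reach R c x}

def postS {Λ : Type*} (R : Set ((Λ → ℕ) × (Λ → ℕ))) (X : Set (Λ → ℕ)) : Set (Λ → ℕ) :=
  {c' | ∃ x ∈ X, Reach R x c'}

/-- A linear subset of ℕ^Λ. -/
def LinearSet {Λ : Type*} (X : Set (Λ → ℕ)) : Prop :=
  ∃ (b : Λ → ℕ) (k : ℕ) (v : Fin k → (Λ → ℕ)),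
    X = {c | ∃ n : Fin k → ℕ, c = b + ∑ i, n i • v i}

/-- A semilinear set: finite union of linear sets. -/
def Semilinear {Λ : Type*} (X : Set (Λ → ℕ)) : Prop :=
  ∃ (k : ℕ) (L : Fin k → Set (Λ → ℕ)), (∀ i, LinearSet (L i)) ∧ X = ⋃ i, L i

/-- Upward closed under the componentwise order. -/
def UpClosed {Λ : Type*} (X : Set (Λ → ℕ)) : Prop :=
  ∀ c ∈ X, ∀ c' : Λ → ℕ, c ≤ c' → c' ∈ X

open Classical in
/-- The set of configurations agreeing with g on S is linear. -/
lemma linear_E {Λ : Type*} [Fintype Λ] (S : Set Λ) (g : Λ → ℕ) :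
    LinearSet {c : Λ → ℕ | ∀ s ∈ S, c s = g s} := by
  classical
  set e := (Fintype.equivFin Λ)
  refine ⟨fun s => if s ∈ S then g s else 0, Fintype.card Λ,
    fun i t => if e.symm i ∈ S then 0 else (if t = e.symm i then 1 else 0), ?_⟩
  ext c
  simp only [Set.mem_setOf_eq]
  constructor
  · intro h
    refine ⟨fun i => c (e.symm i), ?_⟩
    funext t
    simp only [Pi.add_apply, Finset.sum_apply, Pi.smul_apply, smul_eq_mul]
    by_cases ht : t ∈ S
    · rw [if_pos ht, h t ht]
      have : ∀ i ∈ Finset.univ, c (e.symm i) *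
          (if e.symm i ∈ S then 0 else (if t = e.symm i then 1 else 0)) = 0 := by
        intro i _
        by_cases hi : e.symm i ∈ S
        · simp [hi]
        · have : ¬ (t = e.symm i) := by rintro rfl; exact hi ht
          simp [hi, this]
      rw [Finset.sum_congr rfl this]
      simp
    · rw [if_neg ht]
      rw [Finset.sum_eq_single (e t)]
      · simp [ht]
      · intro i _ hit
        have : ¬ (t = e.symm i) := by
          rintro rfl; simp at hit
        simp [this]
      · simp
  · rintro ⟨n, rfl⟩ s hs
    simp only [Pi.add_apply, Finset.sum_apply, Pi.smul_apply, smul_eq_mul]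
    rw [if_pos hs]
    have : ∀ i ∈ Finset.univ, n i *
        (if e.symm i ∈ S then 0 else (if s = e.symm i then 1 else 0)) = 0 := by
      intro i _
      by_cases hi : e.symm i ∈ S
      · simp [hi]
      · have : ¬ (s = e.symm i) := by rintro rfl; exact hi hs
        simp [hi, this]
    rw [Finset.sum_congr rfl this]
    simp

lemma linear_up {Λ : Type*} [Fintype Λ] (m : Λ → ℕ) :
    LinearSet {c : Λ → ℕ | m ≤ c} := by
  classical
  set e := (Fintype.equivFin Λ)
  refine ⟨m, Fintype.card Λ, fun i t => if t = e.symm i then 1 else 0, ?_⟩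
  ext c
  simp only [Set.mem_setOf_eq]
  constructor
  · intro h
    refine ⟨fun i => c (e.symm i) - m (e.symm i), ?_⟩
    funext t
    simp only [Pi.add_apply, Finset.sum_apply, Pi.smul_apply, smul_eq_mul]
    rw [Finset.sum_eq_single (e t)]
    · have : m t ≤ c t := h t
      simp only [Equiv.symm_apply_apply, if_pos rfl, mul_one]
      simp only [eq_self_iff_true, if_true, mul_one]
      omega
    · intro i _ hit
      have : ¬ (t = e.symm i) := by rintro rfl; simp at hit
      simp [this]
    · simp
  · rintro ⟨n, rfl⟩
    intro t
    simp only [Pi.add_apply]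
    exact Nat.le_add_right _ _

lemma semilinear_empty {Λ : Type*} : Semilinear (∅ : Set (Λ → ℕ)) :=
  ⟨0, Fin.elim0, fun i => i.elim0, by simp⟩

lemma LinearSet.semilinear {Λ : Type*} {X : Set (Λ → ℕ)} (h : LinearSet X) :
    Semilinear X :=
  ⟨1, fun _ => X, fun _ => h, by simp [Set.iUnion_const]⟩

/-- A union of a finite family of semilinear sets is semilinear. -/
lemma semilinear_iUnion {Λ ι : Type*} [Fintype ι] (F : ι → Set (Λ → ℕ))
    (h : ∀ i, Semilinear (F i)) : Semilinear (⋃ i, F i) := by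
  classical
  choose k L hlin hrep using h
  let σ := Σ i : ι, Fin (k i)
  let e : Fin (Fintype.card σ) ≃ σ := (Fintype.equivFin σ).symm
  refine ⟨Fintype.card σ, fun j => L (e j).1 (e j).2, fun j => hlin _ _, ?_⟩
  ext c
  simp only [Set.mem_iUnion]
  constructor
  · rintro ⟨i, hc⟩
    rw [hrep i] at hc
    simp only [Set.mem_iUnion] at hc
    obtain ⟨j, hj⟩ := hc
    refine ⟨e.symm ⟨i, j⟩, ?_⟩
    have he : e (e.symm ⟨i, j⟩) = ⟨i, j⟩ := e.apply_symm_apply _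
    rw [he]
    exact hj
  · rintro ⟨j, hj⟩
    refine ⟨(e j).1, ?_⟩
    rw [hrep]
    exact Set.mem_iUnion.2 ⟨(e j).2, hj⟩

lemma semilinear_union {Λ : Type*} {X Y : Set (Λ → ℕ)} (hX : Semilinear X)
    (hY : Semilinear Y) : Semilinear (X ∪ Y) := by
  have := semilinear_iUnion (fun b : Bool => if b then X else Y)
    (by rintro (_|_) <;> simpa)
  convert this using 1
  ext c; simp [or_comm]

/-- Removing the origin from a semilinear set keeps it semilinear. -/
lemma semilinear_sdiff_zero {Λ : Type*} [Fintype Λ] {X : Set (Λ → ℕ)}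
    (h : Semilinear X) : Semilinear (X \ {0}) := by
  classical
  obtain ⟨k, L, hlin, rfl⟩ := h
  have : (⋃ i, L i) \ {0} = ⋃ i, (L i \ {0}) := by
    ext c
    simp only [Set.mem_diff, Set.mem_iUnion, Set.mem_singleton_iff]
    tauto
  rw [this]
  refine semilinear_iUnion _ fun i => ?_
  obtain ⟨b, m, v, hLi⟩ := hlin i
  rw [hLi]
  by_cases hb : b = 0
  · subst hb
    -- {c | ∃ n, c = Σ n i • v i} \ {0} = ⋃ j with v j ≠ 0, {v j + span}
    have key : {c : Λ → ℕ | ∃ n : Fin m → ℕ, c = 0 + ∑ i, n i • v i} \ {0}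
        = ⋃ j : {j : Fin m // v j ≠ 0}, {c | ∃ n : Fin m → ℕ, c = v j.1 + ∑ i, n i • v i} := by
      ext c
      simp only [Set.mem_diff, Set.mem_setOf_eq, Set.mem_iUnion, Set.mem_singleton_iff, zero_add]
      constructor
      · rintro ⟨⟨n, rfl⟩, hne⟩
        have : ∃ s, (∑ i, n i • v i) s ≠ 0 := by
          by_contra hall
          push_neg at hall
          exact hne (funext hall)
        obtain ⟨s, hs⟩ := this
        rw [Finset.sum_apply] at hs
        obtain ⟨j, -, hj⟩ := Finset.exists_ne_zero_of_sum_ne_zero hs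
        simp only [Pi.smul_apply, smul_eq_mul, Nat.mul_ne_zero_iff] at hj
        have hvj : v j ≠ 0 := fun h0 => hj.2 (by rw [h0]; rfl)
        refine ⟨⟨j, hvj⟩, fun i => if i = j then n i - 1 else n i, ?_⟩
        funext t
        simp only [Pi.add_apply, Finset.sum_apply, Pi.smul_apply, smul_eq_mul]
        rw [← Finset.add_sum_erase _ _ (Finset.mem_univ j),
          ← Finset.add_sum_erase _ _ (Finset.mem_univ j)]
        have h1 : n j ≠ 0 := hj.1
        have h2 : ∀ i ∈ Finset.univ.erase j,
            (if i = j then n i - 1 else n i) * v i t = n i * v i t := by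
          intro i hi
          rw [if_neg (Finset.ne_of_mem_erase hi)]
        rw [Finset.sum_congr rfl h2, if_pos rfl]
        obtain ⟨w, hw⟩ := Nat.exists_eq_succ_of_ne_zero h1
        rw [← add_assoc, hw]
        simp only [Nat.succ_sub_one]
        rw [Nat.succ_mul]
        ring
      · rintro ⟨⟨j, hvj⟩, n, rfl⟩
        constructor
        · refine ⟨fun i => if i = j then n i + 1 else n i, ?_⟩
          funext t
          simp only [Pi.add_apply, Finset.sum_apply, Pi.smul_apply, smul_eq_mul]
          rw [← Finset.add_sum_erase _ _ (Finset.mem_univ j),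
            ← Finset.add_sum_erase _ (fun i => (if i = j then n i + 1 else n i) * v i t)
              (Finset.mem_univ j)]
          have h2 : ∀ i ∈ Finset.univ.erase j,
              (if i = j then n i + 1 else n i) * v i t = n i * v i t := by
            intro i hi
            rw [if_neg (Finset.ne_of_mem_erase hi)]
          rw [Finset.sum_congr rfl h2, if_pos rfl]
          ring
        · intro h0
          have : ∃ s, v j s ≠ 0 := by
            by_contra hall
            push_neg at hall
            exact hvj (funext hall)
          obtain ⟨s, hs⟩ := this
          have hcs : v j s + (∑ i, n i • v i) s = 0 := by
            have h := congrFun h0 s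
            simpa using h
          omega
    rw [key]
    exact semilinear_iUnion _ fun j =>
      LinearSet.semilinear ⟨v j.1, m, v, rfl⟩
  · have : {c : Λ → ℕ | ∃ n : Fin m → ℕ, c = b + ∑ i, n i • v i} \ {0}
        = {c | ∃ n : Fin m → ℕ, c = b + ∑ i, n i • v i} := by
      ext c
      simp only [Set.mem_diff, Set.mem_setOf_eq, Set.mem_singleton_iff, and_iff_left_iff_imp]
      rintro ⟨n, rfl⟩ h0
      apply hb
      funext s
      show b s = 0
      have hcs : b s + (∑ i, n i • v i) s = 0 := by
        have h := congrFun h0 s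
        simpa using h
      omega
    rw [this]
    exact LinearSet.semilinear ⟨b, m, v, rfl⟩

/-- An upward closed set is the union of the upward closures of its (finitely
many) minimal elements. -/
lemma upClosed_decomp {Λ : Type*} [Fintype Λ] {U : Set (Λ → ℕ)} (hU : UpClosed U) :
    ∃ M : Set (Λ → ℕ), M.Finite ∧ U = ⋃ m ∈ M, {c | m ≤ c} := by
  classical
  have hpwo : ∀ s : Set (Λ → ℕ), s.IsPWO := fun s =>
    Set.isPWO_of_wellQuasiOrderedLE s
  set M : Set (Λ → ℕ) := {m ∈ U | ∀ x ∈ U, x ≤ m → x = m} with hM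
  have hanti : IsAntichain (· ≤ ·) M := by
    rintro m ⟨hmU, hmmin⟩ m' ⟨hm'U, hm'min⟩ hne hle
    exact hne (hm'min m hmU hle)
  have hfin : M.Finite :=
    hanti.finite_of_partiallyWellOrderedOn (hpwo M)
  refine ⟨M, hfin, ?_⟩
  ext c
  simp only [Set.mem_iUnion, Set.mem_setOf_eq, exists_prop]
  constructor
  · intro hc
    -- find a minimal element below c
    set T : Set (Λ → ℕ) := {y ∈ U | y ≤ c} with hT
    have hTwf : T.IsWF := (hpwo T).isWF
    have hTne : T.Nonempty := ⟨c, hc, le_refl c⟩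
    refine ⟨hTwf.min hTne, ⟨(hTwf.min_mem hTne).1, ?_⟩, (hTwf.min_mem hTne).2⟩
    intro x hxU hxle
    by_contra hne
    have hlt : x < hTwf.min hTne := lt_of_le_of_ne hxle hne
    exact hTwf.not_lt_min hTne ⟨hxU, le_trans hxle (hTwf.min_mem hTne).2⟩ hlt
  · rintro ⟨m, ⟨hmU, -⟩, hmc⟩
    exact hU m hmU c hmc

lemma semilinear_of_upClosed {Λ : Type*} [Fintype Λ] {U : Set (Λ → ℕ)}
    (hU : UpClosed U) : Semilinear U := by
  classical
  obtain ⟨M, hMfin, rfl⟩ := upClosed_decomp hU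
  haveI : Fintype hMfin.toFinset := FinsetCoe.fintype _
  have : (⋃ m ∈ M, {c : Λ → ℕ | m ≤ c}) = ⋃ m : hMfin.toFinset, {c | m.1 ≤ c} := by
    ext c
    simp only [Set.mem_iUnion, Set.Finite.mem_toFinset, Subtype.exists, exists_prop]
  rw [this]
  exact semilinear_iUnion _ fun m => (linear_up m.1).semilinear

lemma semilinear_compl_of_upClosed {Λ : Type*} [Fintype Λ] {U : Set (Λ → ℕ)}
    (hU : UpClosed U) : Semilinear Uᶜ := by
  classical
  obtain ⟨M, hMfin, hUeq⟩ := upClosed_decomp hU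
  set F := hMfin.toFinset with hF
  -- index type: choice of coordinate per minimal element, plus a value below it
  let ι := Σ f : F → Λ, ∀ m : F, Fin (m.1 (f m))
  haveI : Fintype ι := by infer_instance
  let P : ι → Set (Λ → ℕ) := fun fg => {c | ∀ m : F, c (fg.1 m) = (fg.2 m : ℕ)}
  have hcompl : Uᶜ = ⋃ i : ι, P i := by
    ext c
    simp only [Set.mem_compl_iff, hUeq, Set.mem_iUnion, exists_prop, not_exists,
      Set.mem_setOf_eq]
    constructor
    · intro hc
      have hex : ∀ m : F, ∃ s, c s < m.1 s := by
        intro m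
        have hmM : m.1 ∈ M := hMfin.mem_toFinset.1 m.2
        have : ¬ m.1 ≤ c := fun hle => hc m.1 ⟨hmM, hle⟩
        simpa [Pi.le_def, not_forall, not_le] using this
      choose f hf using hex
      exact ⟨⟨f, fun m => ⟨c (f m), hf m⟩⟩, fun m => rfl⟩
    · rintro ⟨⟨f, g⟩, hfg⟩ m ⟨hmM, hle⟩
      have hm : (⟨m, hMfin.mem_toFinset.2 hmM⟩ : F) = ⟨m, hMfin.mem_toFinset.2 hmM⟩ := rfl
      set mm : F := ⟨m, hMfin.mem_toFinset.2 hmM⟩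
      have h1 : c (f mm) = (g mm : ℕ) := hfg mm
      have h2 : (g mm : ℕ) < m (f mm) := (g mm).2
      have h3 : m (f mm) ≤ c (f mm) := hle (f mm)
      have h4 : mm.1 (f mm) = m (f mm) := rfl
      omega
  rw [hcompl]
  refine semilinear_iUnion _ fun fg => ?_
  obtain ⟨f, g⟩ := fg
  by_cases hcons : ∃ m m' : F, f m = f m' ∧ (g m : ℕ) ≠ (g m' : ℕ)
  · -- inconsistent: empty
    obtain ⟨m, m', hff, hgg⟩ := hcons
    have : P ⟨f, g⟩ = ∅ := by
      ext c
      simp only [Set.mem_empty_iff_false, iff_false, Set.mem_setOf_eq, P]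
      intro hc
      have h1 := hc m
      have h2 := hc m'
      have h3 : c (f m) = c (f m') := by rw [hff]
      omega
    rw [this]; exact semilinear_empty
  · push_neg at hcons
    have : P ⟨f, g⟩ = {c | ∀ s ∈ Set.range f,
        c s = if h : ∃ m, f m = s then (g h.choose : ℕ) else 0} := by
      ext c
      simp only [Set.mem_setOf_eq, Set.mem_range, P]
      constructor
      · intro hc s hs
        obtain ⟨m, rfl⟩ := hs
        have hex : ∃ m', f m' = f m := ⟨m, rfl⟩
        rw [dif_pos hex]
        have := hcons hex.choose m hex.choose_spec
        rw [hc m, ← this]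
      · intro hc m
        have hs : ∃ m', f m' = f m := ⟨m, rfl⟩
        have := hc (f m) ⟨m, rfl⟩
        rw [dif_pos hs] at this
        rw [this, hcons hs.choose m hs.choose_spec]
    rw [this]
    exact (linear_E _ _).semilinear

lemma reach_mono {Λ : Type*} {R : Set ((Λ → ℕ) × (Λ → ℕ))} {c x c' : Λ → ℕ}
    (h : Reach R c x) (hle : c ≤ c') : ∃ x', x ≤ x' ∧ Reach R c' x' := by
  induction h with
  | refl => exact ⟨c', hle, Relation.ReflTransGen.refl⟩
  | @tail y z _ hstep ih =>
    obtain ⟨y', hyy', hreach⟩ := ih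
    obtain ⟨rp, hrpR, hrple, rfl⟩ := hstep
    refine ⟨fun s => y' s - rp.1 s + rp.2 s, ?_, hreach.tail ⟨rp, hrpR, ?_, rfl⟩⟩
    · intro s
      show y s - rp.1 s + rp.2 s ≤ y' s - rp.1 s + rp.2 s
      have h1 : y s ≤ y' s := hyy' s
      have h2 : rp.1 s ≤ y s := hrple s
      omega
    · intro s
      exact le_trans (hrple s) (hyy' s)

lemma reach_zero {Λ : Type*} {R : Set ((Λ → ℕ) × (Λ → ℕ))}
    (hprod : ∀ rp ∈ R, rp.2 = (0 : Λ → ℕ) → rp.1 = (0 : Λ → ℕ))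
    {c : Λ → ℕ} (h : Reach R c 0) : c = 0 := by
  induction h using Relation.ReflTransGen.head_induction_on with
  | refl => rfl
  | head hstep _ ih =>
    obtain ⟨rp, hrpR, hrple, heq⟩ := hstep
    subst ih
    have hp : rp.2 = 0 := by
      funext s
      have h0 := congrFun heq s
      simp only [Pi.zero_apply] at h0 ⊢
      omega
    have hr : rp.1 = 0 := hprod rp hrpR hp
    funext s
    have h0 := congrFun heq s
    have h1 : rp.1 s = 0 := congrFun hr s
    have h2 := hrple s
    simp only [Pi.zero_apply] at h0 ⊢
    omega

lemma upClosed_preS {Λ : Type*} {R : Set ((Λ → ℕ) × (Λ → ℕ))} {X : Set (Λ → ℕ)}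
    (hX : UpClosed X) : UpClosed (preS R X) := by
  rintro c ⟨x, hxX, hreach⟩ c' hle
  obtain ⟨x', hxx', hreach'⟩ := reach_mono hreach hle
  exact ⟨x', hX x hxX x' hxx', hreach'⟩

/-- Every con-CRD (with no reaction having empty products and nonempty reactants)
is a gen-CRD whose defining sets I, O_0, O_1 are all semilinear. -/
theorem con_crd_is_semilinear_gen_crd {Λ : Type*} [Fintype Λ]
    (R : Set ((Λ → ℕ) × (Λ → ℕ))) (hR : R.Finite)
    (hprod : ∀ rp ∈ R, rp.2 = (0 : Λ → ℕ) → rp.1 = (0 : Λ → ℕ))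
    (Sig : Set Λ) (Γ : Bool → Set Λ)
    (hcover : Γ false ∪ Γ true = Set.univ) (hdisjΓ : Γ false ∩ Γ true = ∅)
    (I : Set (Λ → ℕ)) (hI : I = {c | ∀ s ∉ Sig, c s = 0} \ {0})
    (L O : Bool → Set (Λ → ℕ))
    (hL : ∀ b, L b = {c | ∃ s ∈ Γ b, c s ≠ 0})
    (hO : ∀ b, O b = {c | ∀ c', Reach R c c' → c' ∈ L b \ L !b})
    (I' : Bool → Set (Λ → ℕ))
    (hcoverI : I' false ∪ I' true = I) (hdisjI : I' false ∩ I' true = ∅)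
    (hpost : ∀ b, postS R (I' b) ⊆ preS R (O b)) :
    Semilinear I ∧ (∀ b, Semilinear (O b)) ∧ (∀ b, I' b = I ∩ preS R (O b)) := by
  classical
  refine ⟨?_, ?_, ?_⟩
  -- I is semilinear
  · rw [hI]
    apply semilinear_sdiff_zero
    have h := linear_E (Λ := Λ) Sigᶜ 0
    have he : {c : Λ → ℕ | ∀ s ∈ Sigᶜ, c s = (0 : Λ → ℕ) s}
        = {c : Λ → ℕ | ∀ s ∉ Sig, c s = 0} := by
      ext c
      simp [Set.mem_compl_iff]
    rw [he] at h
    exact h.semilinear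
  -- each O b is semilinear
  · intro b
    have hLup : UpClosed (L (!b)) := by
      rw [hL]
      rintro c ⟨s, hsΓ, hsne⟩ c' hle
      refine ⟨s, hsΓ, ?_⟩
      have h2 : c s ≤ c' s := hle s
      omega
    have hkey : O b = (preS R (L (!b)))ᶜ \ {0} := by
      rw [hO b]
      ext c
      simp only [Set.mem_setOf_eq, Set.mem_diff, Set.mem_compl_iff,
        Set.mem_singleton_iff]
      constructor
      · intro h
        constructor
        · rintro ⟨x, hxL, hreach⟩
          exact (h x hreach).2 hxL
        · intro h0
          have h1 := (h c Relation.ReflTransGen.refl).1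
          rw [hL b] at h1
          obtain ⟨s, -, hsne⟩ := h1
          rw [h0] at hsne
          exact hsne rfl
      · rintro ⟨hnpre, h0⟩ c' hreach
        have hc' : c' ≠ 0 := by
          rintro rfl
          exact h0 (reach_zero hprod hreach)
        have hnot : c' ∉ L (!b) := fun hmem => hnpre ⟨c', hmem, hreach⟩
        refine ⟨?_, hnot⟩
        rw [hL b]
        obtain ⟨s, hs⟩ : ∃ s, c' s ≠ 0 := by
          by_contra hall
          push_neg at hall
          exact hc' (funext hall)
        by_cases hsb : s ∈ Γ b
        · exact ⟨s, hsb, hs⟩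
        · exfalso
          apply hnot
          rw [hL (!b)]
          refine ⟨s, ?_, hs⟩
          have hsin : s ∈ Γ false ∪ Γ true := by
            rw [hcover]; exact Set.mem_univ s
          cases b with
          | false =>
            rcases hsin with h | h
            · exact absurd h hsb
            · simpa using h
          | true =>
            rcases hsin with h | h
            · simpa using h
            · exact absurd h hsb
    rw [hkey]
    exact semilinear_sdiff_zero (semilinear_compl_of_upClosed (upClosed_preS hLup))
  -- I' b = I ∩ preS R (O b)
  · intro b
    apply Set.Subset.antisymm
    · intro c hc
      have hcI : c ∈ I := by
        rw [← hcoverI]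
        cases b with
        | false => exact Or.inl hc
        | true => exact Or.inr hc
      exact ⟨hcI, hpost b ⟨c, hc, Relation.ReflTransGen.refl⟩⟩
    · rintro c ⟨hcI, hcpre⟩
      have main : ∀ b', c ∈ I' b' → b' = b := by
        intro b' hmem
        by_contra hne
        have hb' : b' = !b := by
          cases b <;> cases b' <;> simp_all
        subst hb'
        obtain ⟨x, hxO, hcx⟩ := hcpre
        have hxpost : x ∈ postS R (I' (!b)) := ⟨c, hmem, hcx⟩
        obtain ⟨y, hyO, hxy⟩ := hpost (!b) hxpost
        rw [hO b] at hxO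
        have hy1 := hxO y hxy
        rw [hO (!b)] at hyO
        have hy2 := hyO y Relation.ReflTransGen.refl
        exact hy1.2 hy2.1
      rw [← hcoverI] at hcI
      rcases hcI with h | h
      · rw [← main false h]; exact h
      · rw [← main true h]; exact h
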